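/- arXiv:2402.15716 — 2 statements merged into one kernel-verified Lean document; each statement's English description precedes it below -/
import Mathlib

section
/- Let C be a finite-dimensional vector space over a field, graded by the integers, and let d₀, d₁ : C → C be linear maps such that d₀ is homogeneous of degree 0, d₁ is homogeneous of degree −2 with respect to the grading, and (d₀ + d₁)² = 0. Then d₀² = 0 and dim H(C, d₀ + d₁) ≤ dim H(C, d₀), where H(C, d) = ker d / im d. -/
section aux

variable {K V : Type*} [Field K] [AddCommGroup V] [Module K V]

private lemma stmt1_mem_biSup {ℱ : ℤ → Submodule K V} {n m : ℤ} (h : m ≠ n) {x : V}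
    (hx : x ∈ ℱ m) : x ∈ ⨆ j, ⨆ (_ : j ≠ n), ℱ j :=
  (le_iSup₂ (f := fun j (_ : j ≠ n) => ℱ j) m h) hx

/-- If `a ∈ ℱ n`, `rest` lies in the span of the other pieces, and `a + rest = 0`,
then `a = 0`. -/
private lemma stmt1_comp_zero {ℱ : ℤ → Submodule K V} (hgr : DirectSum.IsInternal ℱ)
    {n : ℤ} {a rest : V} (ha : a ∈ ℱ n) (hrest : rest ∈ ⨆ j, ⨆ (_ : j ≠ n), ℱ j)
    (h : a + rest = 0) : a = 0 := by
  have hdisj := hgr.submodule_iSupIndep n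
  have ha' : a ∈ ℱ n ⊓ (⨆ j, ⨆ (_ : j ≠ n), ℱ j) := by
    refine ⟨ha, ?_⟩
    have : a = -rest := by rw [eq_neg_iff_add_eq_zero]; exact h
    rw [this]
    exact neg_mem hrest
  simpa using hdisj.le_bot ha'

end aux

theorem stmt1 {K V : Type*} [Field K] [AddCommGroup V] [Module K V]
    [FiniteDimensional K V]
    (ℱ : ℤ → Submodule K V) (hgr : DirectSum.IsInternal ℱ)
    (d₀ d₁ : V →ₗ[K] V)
    (h0 : ∀ (n : ℤ), ∀ x ∈ ℱ n, d₀ x ∈ ℱ n)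
    (h1 : ∀ (n : ℤ), ∀ x ∈ ℱ n, d₁ x ∈ ℱ (n - 2))
    (hd : (d₀ + d₁) ∘ₗ (d₀ + d₁) = 0) :
    d₀ ∘ₗ d₀ = 0 ∧
    Module.finrank K
        (LinearMap.ker (d₀ + d₁) ⧸
          (LinearMap.range (d₀ + d₁)).comap (LinearMap.ker (d₀ + d₁)).subtype) ≤
      Module.finrank K
        (LinearMap.ker d₀ ⧸ (LinearMap.range d₀).comap (LinearMap.ker d₀).subtype) := by
  classical
  have htop := hgr.submodule_iSup_eq_top
  -- expanded form of d² = 0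
  have hdd : ∀ x, d₀ (d₀ x) + (d₀ (d₁ x) + d₁ (d₀ x)) + d₁ (d₁ x) = 0 := by
    intro x
    have := LinearMap.ext_iff.mp hd x
    simp only [LinearMap.comp_apply, LinearMap.add_apply, map_add, LinearMap.zero_apply] at this
    rw [← this]; abel
  -- Part 1: d₀ ∘ d₀ = 0
  have key0 : ∀ n : ℤ, ∀ x ∈ ℱ n, d₀ (d₀ x) = 0 := by
    intro n x hx
    refine stmt1_comp_zero hgr (h0 n _ (h0 n x hx)) ?_ (by rw [← add_assoc]; exact hdd x)
    exact add_mem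
      (stmt1_mem_biSup (show n - 2 ≠ n by omega)
        (add_mem (h0 (n - 2) _ (h1 n x hx)) (h1 n _ (h0 n x hx))))
      (stmt1_mem_biSup (show n - 2 - 2 ≠ n by omega) (h1 (n - 2) _ (h1 n x hx)))
  have part1 : d₀ ∘ₗ d₀ = 0 := by
    have : (⊤ : Submodule K V) ≤ LinearMap.ker (d₀ ∘ₗ d₀) := by
      rw [← htop]
      exact iSup_le fun n x hx => LinearMap.mem_ker.mpr (key0 n x hx)
    ext x
    simpa using this (Submodule.mem_top : x ∈ ⊤)
  refine ⟨part1, ?_⟩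
  -- graded complements of ker d₀ inside each piece
  have exW : ∀ n : ℤ, ∃ W : Submodule K V, W ≤ ℱ n ∧ W ⊓ LinearMap.ker d₀ = ⊥ ∧
      W ⊔ (LinearMap.ker d₀ ⊓ ℱ n) = ℱ n := by
    intro n
    obtain ⟨q, hq⟩ := Submodule.exists_isCompl ((LinearMap.ker d₀).comap (ℱ n).subtype)
    refine ⟨q.map (ℱ n).subtype, Submodule.map_subtype_le _ _, ?_, ?_⟩
    · rw [eq_bot_iff]
      rintro x ⟨hxm, hxk⟩
      obtain ⟨y, hyq, rfl⟩ := Submodule.mem_map.mp hxm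
      have hy : y ∈ (LinearMap.ker d₀).comap (ℱ n).subtype ⊓ q := ⟨hxk, hyq⟩
      rw [hq.inf_eq_bot, Submodule.mem_bot] at hy
      simp [hy]
    · have h2 := congrArg (Submodule.map (ℱ n).subtype) hq.sup_eq_top
      rw [Submodule.map_sup, Submodule.map_top, Submodule.range_subtype,
        Submodule.map_comap_subtype] at h2
      rw [sup_comm, inf_comm (ℱ n) (LinearMap.ker d₀)] at h2
      exact h2
  choose W hWle hWdisj hWsup using exW
  set Ws : Submodule K V := ⨆ n, W n with hWs
  have hWker : ∀ {m : ℤ} {v : V}, v ∈ W m → d₀ v = 0 → v = 0 := by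
    intro m v hv hdv
    have : v ∈ W m ⊓ LinearMap.ker d₀ := ⟨hv, LinearMap.mem_ker.mpr hdv⟩
    rw [hWdisj m] at this
    simpa using this
  -- Claim A : Ws ⊓ ker d₀ = ⊥
  have claimA : ∀ x ∈ Ws, d₀ x = 0 → x = 0 := by
    intro x hx hdx
    obtain ⟨f, hf, rfl⟩ := (Submodule.mem_iSup_iff_exists_finsupp W _).mp hx
    have hfz : ∀ m, f m = 0 := by
      intro m
      by_cases hm : m ∈ f.support
      · refine hWker (hf m) ?_
        have hdx' : ∑ k ∈ f.support, d₀ (f k) = 0 := by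
          simpa [Finsupp.sum, map_sum] using hdx
        have hsum : d₀ (f m) + ∑ k ∈ f.support.erase m, d₀ (f k) = 0 := by
          rw [← Finset.sum_erase_add f.support _ hm] at hdx'
          rw [← hdx']
          abel
        refine stmt1_comp_zero hgr (h0 m _ (hWle m (hf m))) ?_ hsum
        refine Submodule.sum_mem _ fun k hk => ?_
        exact stmt1_mem_biSup (Finset.ne_of_mem_erase hk) (h0 k _ (hWle k (hf k)))
      · simpa using hm
    have : f = 0 := Finsupp.ext hfz
    simp [this]
  -- Claim B : ker (d₀ + d₁) ⊓ Ws = ⊥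
  have claimB : ∀ x ∈ Ws, d₀ x + d₁ x = 0 → x = 0 := by
    intro x hx hdx
    obtain ⟨f, hf, rfl⟩ := (Submodule.mem_iSup_iff_exists_finsupp W _).mp hx
    have hfz : f = 0 := by
      by_contra hne
      have hs : f.support.Nonempty := Finsupp.support_nonempty_iff.mpr hne
      set m := f.support.max' hs with hm
      have hmem : m ∈ f.support := f.support.max'_mem hs
      have hfm : f m = 0 := by
        refine hWker (hf m) ?_
        have hdx' : (∑ k ∈ f.support, d₀ (f k)) + ∑ k ∈ f.support, d₁ (f k) = 0 := by
          simpa [Finsupp.sum, map_sum] using hdx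
        have hsum : d₀ (f m) +
            ((∑ k ∈ f.support.erase m, d₀ (f k)) + ∑ k ∈ f.support, d₁ (f k)) = 0 := by
          rw [← Finset.sum_erase_add f.support _ hmem] at hdx'
          rw [← hdx']
          abel
        refine stmt1_comp_zero hgr (h0 m _ (hWle m (hf m))) ?_ hsum
        refine add_mem (Submodule.sum_mem _ fun k hk => ?_)
          (Submodule.sum_mem _ fun k hk => ?_)
        · exact stmt1_mem_biSup (Finset.ne_of_mem_erase hk) (h0 k _ (hWle k (hf k)))
        · have hkm : k ≤ m := f.support.le_max' k hk
          exact stmt1_mem_biSup (by omega) (h1 k _ (hWle k (hf k)))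
      exact (Finsupp.mem_support_iff.mp hmem) hfm
    simp [hfz]
  -- Ws is a complement of ker d₀
  have hcompl : IsCompl Ws (LinearMap.ker d₀) := by
    constructor
    · rw [disjoint_iff, eq_bot_iff]
      rintro x ⟨hx1, hx2⟩
      simpa using claimA x hx1 (LinearMap.mem_ker.mp hx2)
    · rw [codisjoint_iff, eq_top_iff, ← htop]
      refine iSup_le fun n => ?_
      rw [← hWsup n]
      exact sup_le (le_trans (le_iSup W n) le_sup_left)
        (le_trans inf_le_left le_sup_right)
  have hfr1 : Module.finrank K Ws + Module.finrank K (LinearMap.ker d₀) =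
      Module.finrank K V := Submodule.finrank_add_eq_of_isCompl hcompl
  -- ker (d₀ + d₁) is disjoint from Ws
  have hdisj2 : LinearMap.ker (d₀ + d₁) ⊓ Ws = ⊥ := by
    rw [eq_bot_iff]
    rintro x ⟨hx1, hx2⟩
    have : d₀ x + d₁ x = 0 := by simpa using LinearMap.mem_ker.mp hx1
    simpa using claimB x hx2 this
  have hfr2 : Module.finrank K (LinearMap.ker (d₀ + d₁)) + Module.finrank K Ws ≤
      Module.finrank K V := by
    have h3 := Submodule.finrank_sup_add_finrank_inf_eq (LinearMap.ker (d₀ + d₁)) Ws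
    rw [hdisj2] at h3
    simp only [finrank_bot, add_zero] at h3
    rw [← h3]
    exact Submodule.finrank_le _
  have hkerle : Module.finrank K (LinearMap.ker (d₀ + d₁)) ≤
      Module.finrank K (LinearMap.ker d₀) := by omega
  -- final rank computation
  have hle : LinearMap.range (d₀ + d₁) ≤ LinearMap.ker (d₀ + d₁) := by
    rintro _ ⟨x, rfl⟩
    exact LinearMap.mem_ker.mpr (LinearMap.ext_iff.mp hd x)
  have hle0 : LinearMap.range d₀ ≤ LinearMap.ker d₀ := by
    rintro _ ⟨x, rfl⟩
    exact LinearMap.mem_ker.mpr (LinearMap.ext_iff.mp part1 x)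
  have hr := LinearMap.finrank_range_add_finrank_ker (d₀ + d₁)
  have hr0 := LinearMap.finrank_range_add_finrank_ker d₀
  have hq := Submodule.finrank_quotient_add_finrank
    ((LinearMap.range (d₀ + d₁)).comap (LinearMap.ker (d₀ + d₁)).subtype)
  have hq0 := Submodule.finrank_quotient_add_finrank
    ((LinearMap.range d₀).comap (LinearMap.ker d₀).subtype)
  have hc : Module.finrank K
      ((LinearMap.range (d₀ + d₁)).comap (LinearMap.ker (d₀ + d₁)).subtype) =
      Module.finrank K (LinearMap.range (d₀ + d₁)) :=
    (Submodule.comapSubtypeEquivOfLe hle).finrank_eq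
  have hc0 : Module.finrank K
      ((LinearMap.range d₀).comap (LinearMap.ker d₀).subtype) =
      Module.finrank K (LinearMap.range d₀) :=
    (Submodule.comapSubtypeEquivOfLe hle0).finrank_eq
  omega
end

section
/- Let V be the free Z-module on {v₊, v₋} and W the free Z-module on {w₊, w₋, w₊′, w₋′}. Fix integers A, B, C, D. Define m : W ⊗ V → W by m(w ⊗ v₊) = w for all w, m(w₊ ⊗ v₋) = w₋, m(w₋ ⊗ v₋) = 0, m(w₊′ ⊗ v₋) = A·w₋ + w₋′, m(w₋′ ⊗ v₋) = B·w₊. Define σ_W : W → W by σ_W(w₊) = 2w₋, σ_W(w₋) = 0, σ_W(w₊′) = (A+C)w₋ + 2w₋′, σ_W(w₋′) = (B+D)w₊, and σ_V : V → V by σ_V(v₊) = 2v₋, σ_V(v₋) = 0. If m ∘ (σ_W ⊗ id_V) = m ∘ (id_W ⊗ σ_V) and m ∘ (σ_W ⊗ id_V) = σ_W ∘ m as maps W ⊗ V → W, then A = C and B = D = 0. -/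
open TensorProduct

abbrev Vmod : Type := ℤ × ℤ
def vp : Vmod := (1, 0)
def vm : Vmod := (0, 1)

abbrev Wmod : Type := Fin 4 → ℤ
def wp : Wmod := Pi.single 0 1
def wm : Wmod := Pi.single 1 1
def wp' : Wmod := Pi.single 2 1
def wm' : Wmod := Pi.single 3 1

theorem stmt7 (A B C D : ℤ)
    (m : Wmod ⊗[ℤ] Vmod →ₗ[ℤ] Wmod)
    (σW : Wmod →ₗ[ℤ] Wmod) (σV : Vmod →ₗ[ℤ] Vmod)
    (hm1 : ∀ w : Wmod, m (w ⊗ₜ vp) = w)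
    (hm2 : m (wp ⊗ₜ vm) = wm)
    (hm3 : m (wm ⊗ₜ vm) = 0)
    (hm4 : m (wp' ⊗ₜ vm) = A • wm + wm')
    (hm5 : m (wm' ⊗ₜ vm) = B • wp)
    (hσ1 : σW wp = (2 : ℤ) • wm)
    (hσ2 : σW wm = 0)
    (hσ3 : σW wp' = (A + C) • wm + (2 : ℤ) • wm')
    (hσ4 : σW wm' = (B + D) • wp)
    (hσV1 : σV vp = (2 : ℤ) • vm)
    (hσV2 : σV vm = 0)
    (hc1 : m ∘ₗ TensorProduct.map σW LinearMap.id
            = m ∘ₗ TensorProduct.map LinearMap.id σV)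
    (hc2 : m ∘ₗ TensorProduct.map σW LinearMap.id = σW ∘ₗ m) :
    A = C ∧ B = 0 ∧ D = 0 := by
  have h1 : m (σW wp' ⊗ₜ[ℤ] vp) = m (wp' ⊗ₜ[ℤ] σV vp) := by
    have := LinearMap.congr_fun hc1 (wp' ⊗ₜ[ℤ] vp); exact this
  have h2 : m (σW wp' ⊗ₜ[ℤ] vm) = m (wp' ⊗ₜ[ℤ] σV vm) := by
    have := LinearMap.congr_fun hc1 (wp' ⊗ₜ[ℤ] vm); exact this
  have h3 : m (σW wm' ⊗ₜ[ℤ] vm) = m (wm' ⊗ₜ[ℤ] σV vm) := by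
    have := LinearMap.congr_fun hc1 (wm' ⊗ₜ[ℤ] vm); exact this
  have k : ∀ (r : ℤ) (w : Wmod) (v : Vmod), m ((r • w) ⊗ₜ[ℤ] v) = r • m (w ⊗ₜ[ℤ] v) := by
    intro r w v
    rw [← map_zsmul, TensorProduct.smul_tmul']
  simp only [LinearMap.comp_apply, TensorProduct.map_tmul, LinearMap.id_apply,
    hσ3, hσ4, hσV1, hσV2, TensorProduct.add_tmul, TensorProduct.smul_tmul,
    TensorProduct.tmul_smul, TensorProduct.tmul_zero, map_add, map_smul, map_zero,
    hm1, hm2, hm3, hm4, hm5, smul_zero, smul_add, smul_smul] at h1 h2 h3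
  erw [k, k, k] at h1
  erw [k, k] at h2
  erw [k] at h3
  simp only [hm1, hm2, hm3, hm4, hm5, smul_zero, smul_add, smul_smul] at h1 h2 h3
  have e1 := congrFun h1 1
  have e2 := congrFun h2 0
  have e3 := congrFun h3 1
  simp only [wp, wm, wp', wm', Pi.add_apply, Pi.smul_apply, Pi.zero_apply,
    Pi.single_apply, smul_eq_mul] at e1 e2 e3
  norm_num at e1 e2 e3
  omega
end
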